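/- Let f' : GL(d,ℝ) → ℝ be an invariant function with variation function F', and define the reducible function f : GL(d,ℝ)^k → ℝ by f(g₁,…,g_k) = f'(g₁·g₂⋯g_k). Then for every i ∈ {1,…,k} and every (g₁,…,g_k) ∈ GL(d,ℝ)^k, the variation functions of f satisfy F_i(g₁,…,g_k) = (g₁⋯g_{i−1})⁻¹ · F₁(g₁,…,g_k) · (g₁⋯g_{i−1}). -/

import Mathlib

open Matrix

attribute [local instance] Matrix.normedAddCommGroup Matrix.normedSpace

noncomputable section

/-- An invariant multi-function on `GL(d,ℝ)^k`: a real-valued function on `k`-tuples of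
`d × d` real matrices that is differentiable on the open set of tuples of invertible
matrices and invariant under the diagonal action of `GL(d,ℝ)` by conjugation. -/
def IsInvariantFun (d k : ℕ) (f : (Fin k → Matrix (Fin d) (Fin d) ℝ) → ℝ) : Prop :=
  DifferentiableOn ℝ f {g : Fin k → Matrix (Fin d) (Fin d) ℝ | ∀ i, IsUnit (g i)} ∧
  ∀ h : Matrix (Fin d) (Fin d) ℝ, IsUnit h →
    ∀ g : Fin k → Matrix (Fin d) (Fin d) ℝ, (∀ i, IsUnit (g i)) →
      f (fun i => h * g i * h⁻¹) = f g

/-- `F` is the tuple of variation functions of `f` with respect to the trace form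
`𝔅(X,Y) = tr (X*Y)`: the matrix `F j g` satisfies that `tr (F j g * X)` is the derivative
at `t = 0` of `t ↦ f (g₁, …, exp(tX)·g_j, …, g_k)`, for every `X`. -/
def IsVariationFun (d k : ℕ) (f : (Fin k → Matrix (Fin d) (Fin d) ℝ) → ℝ)
    (F : Fin k → (Fin k → Matrix (Fin d) (Fin d) ℝ) → Matrix (Fin d) (Fin d) ℝ) : Prop :=
  ∀ (j : Fin k) (g : Fin k → Matrix (Fin d) (Fin d) ℝ), (∀ i, IsUnit (g i)) →
    ∀ X : Matrix (Fin d) (Fin d) ℝ,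
      HasDerivAt
        (fun t : ℝ => f (Function.update g j (NormedSpace.exp (t • X) * g j)))
        (Matrix.trace (F j g * X)) 0

/-- An invariant function on `GL(d,ℝ)`: a real-valued function on `d × d` real matrices
that is differentiable on the open set of invertible matrices and invariant under
conjugation. -/
def IsInvariantFunOne (d : ℕ) (f : Matrix (Fin d) (Fin d) ℝ → ℝ) : Prop :=
  DifferentiableOn ℝ f {g : Matrix (Fin d) (Fin d) ℝ | IsUnit g} ∧
  ∀ h : Matrix (Fin d) (Fin d) ℝ, IsUnit h →
    ∀ g : Matrix (Fin d) (Fin d) ℝ, IsUnit g → f (h * g * h⁻¹) = f g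

/-- `F` is the variation function of `f : GL(d,ℝ) → ℝ` with respect to the trace form:
`tr (F g * X)` is the derivative at `t = 0` of `t ↦ f (exp(tX)·g)`, for every `X`. -/
def IsVariationFunOne (d : ℕ) (f : Matrix (Fin d) (Fin d) ℝ → ℝ)
    (F : Matrix (Fin d) (Fin d) ℝ → Matrix (Fin d) (Fin d) ℝ) : Prop :=
  ∀ g : Matrix (Fin d) (Fin d) ℝ, IsUnit g → ∀ X : Matrix (Fin d) (Fin d) ℝ,
    HasDerivAt (fun t : ℝ => f (NormedSpace.exp (t • X) * g))
      (Matrix.trace (F g * X)) 0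

lemma traceExt {d : ℕ} (A B : Matrix (Fin d) (Fin d) ℝ)
    (h : ∀ X : Matrix (Fin d) (Fin d) ℝ, Matrix.trace (A * X) = Matrix.trace (B * X)) :
    A = B := by
  have e : ∀ C : Matrix (Fin d) (Fin d) ℝ, ∀ i j : Fin d,
      Matrix.trace (C * Matrix.single j i 1) = C i j := fun C i j => by
    simp [Matrix.trace, Matrix.diag, Matrix.mul_apply, Matrix.single, ite_and,
      Finset.sum_ite_eq, Finset.sum_ite_eq']
  ext i j
  have hX := h (Matrix.single j i 1)
  rw [e A, e B] at hX
  exact hX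

lemma ofFnUpdate {k : ℕ} {M : Type*} (g : Fin k → M) (j : Fin k) (v : M) :
    List.ofFn (Function.update g j v) = (List.ofFn g).set j v := by
  apply List.ext_getElem
  · simp
  · intro n h1 h2
    simp only [List.length_ofFn] at h1
    simp only [List.getElem_ofFn, List.getElem_set, List.getElem_ofFn]
    by_cases hn : (j : ℕ) = n
    · have : (⟨n, h1⟩ : Fin k) = j := Fin.ext hn.symm
      rw [if_pos hn, this, Function.update_self]
    · rw [if_neg hn, Function.update_of_ne]
      intro hc
      exact hn (congrArg Fin.val hc).symm

/-- for the reducible function `f (g₁,…,g_k) = f' (g₁ · g₂ ⋯ g_k)` associated to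
an invariant function `f'` with variation function `F'`, the variation functions of `f`
satisfy `F_i (g₁,…,g_k) = (g₁ ⋯ g_{i-1})⁻¹ · F₁ (g₁,…,g_k) · (g₁ ⋯ g_{i-1})`. -/
theorem variation_of_reducible_function (d k : ℕ) (hk : 0 < k)
    (f' : Matrix (Fin d) (Fin d) ℝ → ℝ)
    (F' : Matrix (Fin d) (Fin d) ℝ → Matrix (Fin d) (Fin d) ℝ)
    (hf' : IsInvariantFunOne d f') (hF' : IsVariationFunOne d f' F')
    (F : Fin k → (Fin k → Matrix (Fin d) (Fin d) ℝ) → Matrix (Fin d) (Fin d) ℝ)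
    (hF : IsVariationFun d k (fun g => f' (List.ofFn g).prod) F)
    (i : Fin k) (g : Fin k → Matrix (Fin d) (Fin d) ℝ) (hg : ∀ l, IsUnit (g l)) :
    F i g = (((List.ofFn g).take (i : ℕ)).prod)⁻¹ * F ⟨0, hk⟩ g *
      ((List.ofFn g).take (i : ℕ)).prod := by
  obtain ⟨P, hPdef⟩ : ∃ P : Matrix (Fin d) (Fin d) ℝ,
      ((List.ofFn g).take (i : ℕ)).prod = P := ⟨_, rfl⟩
  rw [hPdef]
  have hmem : ∀ m ∈ List.ofFn g, IsUnit m := by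
    intro m hm
    rw [List.mem_ofFn] at hm
    obtain ⟨l, rfl⟩ := hm
    exact hg l
  have hP : IsUnit P := hPdef ▸ List.prod_isUnit fun m hm => hmem m (List.mem_of_mem_take hm)
  have hPP : P⁻¹ * P = 1 := Matrix.nonsing_inv_mul P ((Matrix.isUnit_iff_isUnit_det P).mp hP)
  have hiL : (i : ℕ) < (List.ofFn g).length := by simpa using i.isLt
  have h0L : 0 < (List.ofFn g).length := by simpa using hk
  -- product decomposition at position i
  have hprod_set : ∀ v : Matrix (Fin d) (Fin d) ℝ,
      (List.ofFn (Function.update g i v)).prod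
        = P * v * ((List.ofFn g).drop ((i : ℕ) + 1)).prod := by
    intro v
    rw [ofFnUpdate, List.prod_set, if_pos hiL, hPdef]
  have hLprod : (List.ofFn g).prod
      = P * g i * ((List.ofFn g).drop ((i : ℕ) + 1)).prod := by
    rw [← List.prod_take_mul_prod_drop (List.ofFn g) ((i : ℕ) + 1),
      List.prod_take_succ (List.ofFn g) (i : ℕ) hiL, hPdef]
    congr 2
    simp
  -- product decomposition at position 0
  have hprod_set0 : ∀ v : Matrix (Fin d) (Fin d) ℝ,
      (List.ofFn (Function.update g ⟨0, hk⟩ v)).prod = v * ((List.ofFn g).drop 1).prod := by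
    intro v
    rw [ofFnUpdate, List.prod_set, if_pos h0L]
    simp
  have hLprod0 : (List.ofFn g).prod = g ⟨0, hk⟩ * ((List.ofFn g).drop 1).prod := by
    rw [← List.prod_take_mul_prod_drop (List.ofFn g) 1, List.prod_take_succ (List.ofFn g) 0 h0L]
    rw [List.take_zero, List.prod_nil, one_mul]
    congr 1
    simp
  -- reduce to equality of traces against every X
  refine traceExt _ _ fun X => ?_
  have key : ∀ t : ℝ,
      (List.ofFn (Function.update g i (NormedSpace.exp (t • X) * g i))).prod
        = NormedSpace.exp (t • (P * X * P⁻¹)) * (List.ofFn g).prod := by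
    intro t
    have hc : t • (P * X * P⁻¹) = P * (t • X) * P⁻¹ := by
      simp [mul_smul_comm, smul_mul_assoc]
    rw [hprod_set, hc, Matrix.exp_conj P (t • X) hP, hLprod]
    calc P * (NormedSpace.exp (t • X) * g i) * ((List.ofFn g).drop ((i : ℕ) + 1)).prod
        = P * NormedSpace.exp (t • X) * (P⁻¹ * P) * g i
            * ((List.ofFn g).drop ((i : ℕ) + 1)).prod := by
          rw [hPP]; noncomm_ring
      _ = P * NormedSpace.exp (t • X) * P⁻¹
            * (P * g i * ((List.ofFn g).drop ((i : ℕ) + 1)).prod) := by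
          noncomm_ring
  have key0 : ∀ t : ℝ,
      (List.ofFn (Function.update g ⟨0, hk⟩
          (NormedSpace.exp (t • (P * X * P⁻¹)) * g ⟨0, hk⟩))).prod
        = NormedSpace.exp (t • (P * X * P⁻¹)) * (List.ofFn g).prod := by
    intro t
    rw [hprod_set0, hLprod0]
    noncomm_ring
  have h1 : HasDerivAt
      (fun t : ℝ => f' (NormedSpace.exp (t • (P * X * P⁻¹)) * (List.ofFn g).prod))
      (Matrix.trace (F i g * X)) 0 := by
    refine (hF i g hg X).congr_of_eventuallyEq ?_
    exact Filter.Eventually.of_forall fun t => by simp only [key t]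
  have h2 : HasDerivAt
      (fun t : ℝ => f' (NormedSpace.exp (t • (P * X * P⁻¹)) * (List.ofFn g).prod))
      (Matrix.trace (F ⟨0, hk⟩ g * (P * X * P⁻¹))) 0 := by
    refine (hF ⟨0, hk⟩ g hg (P * X * P⁻¹)).congr_of_eventuallyEq ?_
    exact Filter.Eventually.of_forall fun t => by simp only [key0 t]
  rw [h1.unique h2]
  rw [show F ⟨0, hk⟩ g * (P * X * P⁻¹) = (F ⟨0, hk⟩ g * P * X) * P⁻¹ by noncomm_ring,
    Matrix.trace_mul_comm]
  congr 1
  noncomm_ring
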